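/- With θ_{μ,ν} := τ_{μ,ν} ∏_{λ∈H}(τ_{ν,ν} − τ_{νλ,νλ}) as above, if additionally τ_{μ,μ} ≠ 0 for all μ ∈ Λ and ∏_{α∈E}(τ_{μ,μ} − τ_{μα,μα}) ≠ 0 for every μ and every finite exhaustive E ⊆ s(μ)Λ∖{s(μ)}, then θ_{μ,μ} ≠ 0 for all μ ∈ Λ^p v. -/

import Mathlib

universe u

/-- A quasi-lattice ordered group in the sense of Nica: a (discrete) group `G` together
with a subsemigroup `P` containing the identity with `P ∩ P⁻¹ = {1}`, such that under the
partial order `p ≤ q ↔ p⁻¹ * q ∈ P`, any pair of elements of `G` with a common upper bound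
in `P` has a least common upper bound in `P`. -/
structure QLOGroup (G : Type u) [Group G] where
  P : Set G
  one_mem : (1 : G) ∈ P
  mul_mem : ∀ {p q : G}, p ∈ P → q ∈ P → p * q ∈ P
  eq_one_of_mem_inv_mem : ∀ p : G, p ∈ P → p⁻¹ ∈ P → p = 1
  lub_exists : ∀ p q : G, (∃ r ∈ P, p⁻¹ * r ∈ P ∧ q⁻¹ * r ∈ P) →
    ∃ r ∈ P, p⁻¹ * r ∈ P ∧ q⁻¹ * r ∈ P ∧
      ∀ s ∈ P, p⁻¹ * s ∈ P → q⁻¹ * s ∈ P → r⁻¹ * s ∈ P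

namespace QLOGroup

variable {G : Type u} [Group G]

/-- The left-invariant partial order on `G` induced by `P`. -/
def le (Q : QLOGroup G) (p q : G) : Prop := p⁻¹ * q ∈ Q.P

/-- `s` is the least common upper bound in `P` of `p` and `q` (i.e. `s = p ∨ q < ∞`). -/
def IsLub (Q : QLOGroup G) (p q s : G) : Prop :=
  s ∈ Q.P ∧ Q.le p s ∧ Q.le q s ∧ ∀ t ∈ Q.P, Q.le p t → Q.le q t → Q.le s t

/-- `s` is the least upper bound in `P` of the set `A` (i.e. `s = ∨A < ∞`). -/
def IsLubSet (Q : QLOGroup G) (A : Set G) (s : G) : Prop :=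
  s ∈ Q.P ∧ (∀ a ∈ A, Q.le a s) ∧ ∀ t ∈ Q.P, (∀ a ∈ A, Q.le a t) → Q.le s t

/-- `p` and `q` have a common upper bound in `P` (i.e. `p ∨ q < ∞`). -/
def HasLub (Q : QLOGroup G) (p q : G) : Prop := ∃ s, Q.IsLub p q s

/-- A subset `F` is `∨`-closed if whenever `p, q ∈ F` have `p ∨ q < ∞`, then `p ∨ q ∈ F`. -/
def VeeClosed (Q : QLOGroup G) (F : Set G) : Prop :=
  ∀ p ∈ F, ∀ q ∈ F, ∀ s, Q.IsLub p q s → s ∈ F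

/-- `F̄ = {∨A : A ⊆ F, A ≠ ∅, ∨A ≠ ∞}`. -/
def veeClosure (Q : QLOGroup G) (F : Set G) : Set G :=
  {s | ∃ A ⊆ F, A.Nonempty ∧ Q.IsLubSet A s}

end QLOGroup

/-- A `P`-graph for a quasi-lattice ordered group `(G,P)`: a countable category with a
degree functor `d` into `P` satisfying the unique factorisation property.  Composition is
written in the path order of Raeburn-Sims: `comp μ ν` is defined when `s(μ) = r(ν)` (with
`src = s = dom` and `tgt = r = cod`), and `comp` is a total function whose axioms are only
imposed on composable pairs. -/
structure PGraph {G : Type u} [Group G] (Q : QLOGroup G) where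
  Obj : Type
  Mor : Type
  countable_mor : Countable Mor
  src : Mor → Obj
  tgt : Mor → Obj
  ident : Obj → Mor
  comp : Mor → Mor → Mor
  src_ident : ∀ v, src (ident v) = v
  tgt_ident : ∀ v, tgt (ident v) = v
  src_comp : ∀ μ ν, src μ = tgt ν → src (comp μ ν) = src ν
  tgt_comp : ∀ μ ν, src μ = tgt ν → tgt (comp μ ν) = tgt μ
  id_comp : ∀ μ, comp (ident (tgt μ)) μ = μ
  comp_id : ∀ μ, comp μ (ident (src μ)) = μ
  comp_assoc : ∀ μ ν ρ, src μ = tgt ν → src ν = tgt ρ →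
    comp (comp μ ν) ρ = comp μ (comp ν ρ)
  d : Mor → G
  d_mem : ∀ μ, d μ ∈ Q.P
  d_ident : ∀ v, d (ident v) = 1
  d_comp : ∀ μ ν, src μ = tgt ν → d (comp μ ν) = d μ * d ν
  factorisation : ∀ (lam : Mor) (p q : G), p ∈ Q.P → q ∈ Q.P → d lam = p * q →
    ∃! mn : Mor × Mor, src mn.1 = tgt mn.2 ∧ lam = comp mn.1 mn.2 ∧ d mn.1 = p ∧ d mn.2 = q

namespace PGraph

variable {G : Type u} [Group G] {Q : QLOGroup G} (Λ : PGraph Q)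

/-- The prefix order: `λ ⪯ μ` iff `μ = λμ'` for some `μ'`. -/
def PrefixLe (lam mu : Λ.Mor) : Prop :=
  ∃ tail, Λ.src lam = Λ.tgt tail ∧ mu = Λ.comp lam tail

/-- The set of minimal common extensions of `μ` and `ν`. -/
def MCE (mu nu : Λ.Mor) : Set Λ.Mor :=
  {lam | Λ.PrefixLe mu lam ∧ Λ.PrefixLe nu lam ∧ Q.IsLub (Λ.d mu) (Λ.d nu) (Λ.d lam)}

/-- `Λ` is finitely aligned if all the sets `MCE(μ,ν)` are finite. -/
def FinitelyAligned : Prop := ∀ mu nu : Λ.Mor, (Λ.MCE mu nu).Finite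

/-- A filter of `Λ`: a nonempty subset that is downward closed (F1) and upward
directed (F2) for the prefix order. -/
def IsGraphFilter (U : Set Λ.Mor) : Prop :=
  U.Nonempty ∧ (∀ mu ∈ U, ∀ lam, Λ.PrefixLe lam mu → lam ∈ U) ∧
    (∀ mu ∈ U, ∀ nu ∈ U, ∃ lam ∈ U, Λ.PrefixLe mu lam ∧ Λ.PrefixLe nu lam)

/-- An ultrafilter of `Λ`: a filter maximal under inclusion. -/
def IsGraphUltrafilter (U : Set Λ.Mor) : Prop :=
  Λ.IsGraphFilter U ∧ ∀ V, Λ.IsGraphFilter V → U ⊆ V → U = V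

/-- `λ·U = ⋃_{μ ∈ U} {α : α ⪯ λμ}`. -/
def actFwd (lam : Λ.Mor) (U : Set Λ.Mor) : Set Λ.Mor :=
  {a | ∃ mu ∈ U, Λ.PrefixLe a (Λ.comp lam mu)}

/-- `λ*·V = {μ : λμ ∈ V}`. -/
def actBwd (lam : Λ.Mor) (V : Set Λ.Mor) : Set Λ.Mor :=
  {mu | Λ.src lam = Λ.tgt mu ∧ Λ.comp lam mu ∈ V}

/-- `(μ,ν)` is a balanced pair: `s(μ) = s(ν)` and `d(μ) = d(ν)`. -/
def Balanced (mu nu : Λ.Mor) : Prop := Λ.src mu = Λ.src nu ∧ Λ.d mu = Λ.d nu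

/-- The pairs `(α,β)` with `να = ξβ ∈ MCE(ν,ξ)`. -/
def MCEpairs (nu xi : Λ.Mor) : Set (Λ.Mor × Λ.Mor) :=
  {p | Λ.src nu = Λ.tgt p.1 ∧ Λ.src xi = Λ.tgt p.2 ∧
    Λ.comp nu p.1 = Λ.comp xi p.2 ∧ Λ.comp nu p.1 ∈ Λ.MCE nu xi}

end PGraph

/-- A representation of the balanced pairs `Λ *_{d,s} Λ` of `Λ` in a C*-algebra `A`:
(B1) `τ_{μ,ν}* = τ_{ν,μ}` and
(B2) `τ_{μ,ν} τ_{ξ,η} = ∑_{να = ξβ ∈ MCE(ν,ξ)} τ_{μα,ηβ}`. -/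
def PGraph.IsBalRep {G : Type u} [Group G] {Q : QLOGroup G} (Λ : PGraph Q)
    {A : Type*} [NormedRing A] [StarRing A] [CStarRing A]
    (τ : Λ.Mor → Λ.Mor → A) : Prop :=
  (∀ mu nu : Λ.Mor, Λ.Balanced mu nu → star (τ mu nu) = τ nu mu) ∧
  (∀ mu nu xi eta : Λ.Mor, Λ.Balanced mu nu → Λ.Balanced xi eta →
    τ mu nu * τ xi eta =
      ∑ᶠ p ∈ Λ.MCEpairs nu xi, τ (Λ.comp mu p.1) (Λ.comp eta p.2))

/-- The elements `θ_{μ,ν} = τ_{μ,ν} ∏_{λ ∈ H} (τ_{ν,ν} − τ_{νλ,νλ})`, where the finite set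
`H` is recorded as a duplicate-free list (the product is order-independent since the
factors commute). -/
noncomputable def PGraph.theta {G : Type u} [Group G] {Q : QLOGroup G} (Λ : PGraph Q)
    {A : Type*} [NormedRing A] [StarRing A] [CStarRing A]
    (τ : Λ.Mor → Λ.Mor → A) (H : List Λ.Mor) (mu nu : Λ.Mor) : A :=
  τ mu nu * ((H.map fun lam => τ nu nu - τ (Λ.comp nu lam) (Λ.comp nu lam)).prod)

section Aux14

variable {G : Type u} [Group G] {Q : QLOGroup G} (Λ : PGraph Q)

lemma aux_qle_refl (a : G) : Q.le a a := by
  simp [QLOGroup.le, Q.one_mem]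

lemma aux_qle_antisymm {a b : G} (h1 : Q.le a b) (h2 : Q.le b a) : a = b := by
  have h3 : (a⁻¹ * b)⁻¹ ∈ Q.P := by simpa [mul_inv_rev, QLOGroup.le] using h2
  have := Q.eq_one_of_mem_inv_mem (a⁻¹ * b) h1 h3
  exact (inv_mul_eq_one.mp this)

lemma aux_deg_one {α : Λ.Mor} (h : Λ.d α = 1) : α = Λ.ident (Λ.tgt α) := by
  obtain ⟨mn, hmn, huniq⟩ := Λ.factorisation α 1 1 Q.one_mem Q.one_mem (by simp [h])
  have h1 := huniq (Λ.ident (Λ.tgt α), α)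
    ⟨by rw [Λ.src_ident], (Λ.id_comp α).symm, Λ.d_ident _, h⟩
  have h2 := huniq (α, Λ.ident (Λ.src α))
    ⟨by rw [Λ.tgt_ident], (Λ.comp_id α).symm, h, Λ.d_ident _⟩
  exact (congrArg Prod.fst (h2.trans h1.symm))

lemma aux_comp_cancel {μ α β : Λ.Mor} (hα : Λ.src μ = Λ.tgt α) (hβ : Λ.src μ = Λ.tgt β)
    (h : Λ.comp μ α = Λ.comp μ β) : α = β := by
  have hd : Λ.d α = Λ.d β := by
    have hh := congrArg Λ.d h
    rw [Λ.d_comp _ _ hα, Λ.d_comp _ _ hβ] at hh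
    exact mul_left_cancel hh
  obtain ⟨mn, hmn, huniq⟩ := Λ.factorisation (Λ.comp μ α) (Λ.d μ) (Λ.d α)
    (Λ.d_mem μ) (Λ.d_mem α) (Λ.d_comp _ _ hα)
  have h1 := huniq (μ, α) ⟨hα, rfl, rfl, rfl⟩
  have h2 := huniq (μ, β) ⟨hβ, h, rfl, hd.symm⟩
  exact congrArg Prod.snd (h1.trans h2.symm)

lemma aux_lub_right {a c s : G} (ha : a ∈ Q.P) (hc : c ∈ Q.P) (h : Q.IsLub a (a * c) s) :
    s = a * c := by
  obtain ⟨hs, h1, h2, h3⟩ := h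
  refine (aux_qle_antisymm h2 (h3 (a * c) (Q.mul_mem ha hc) ?_ (aux_qle_refl _))).symm
  simp [QLOGroup.le, hc]

lemma aux_lub_left {a c s : G} (ha : a ∈ Q.P) (hc : c ∈ Q.P) (h : Q.IsLub (a * c) a s) :
    s = a * c := by
  obtain ⟨hs, h1, h2, h3⟩ := h
  refine (aux_qle_antisymm h1 (h3 (a * c) (Q.mul_mem ha hc) (aux_qle_refl _) ?_)).symm
  simp [QLOGroup.le, hc]

lemma aux_lub_self {a s : G} (ha : a ∈ Q.P) (h : Q.IsLub a a s) : s = a := by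
  obtain ⟨hs, h1, h2, h3⟩ := h
  exact (aux_qle_antisymm h1 (h3 a ha (aux_qle_refl _) (aux_qle_refl _))).symm

lemma aux_le_mul {a c : G} (hc : c ∈ Q.P) : Q.le a (a * c) := by
  simp [QLOGroup.le, hc]

/-- `μ ∈ MCE(μ,μ)` essentials and `MCEpairs(μ,μ)` is a singleton. -/
lemma aux_MCEpairs_self (μ : Λ.Mor) :
    Λ.MCEpairs μ μ = {(Λ.ident (Λ.src μ), Λ.ident (Λ.src μ))} := by
  ext q
  constructor
  · rintro ⟨hc1, hc2, heq, ⟨⟨α, hα, hαe⟩, _, hlub⟩⟩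
    have hdeg : Λ.d (Λ.comp μ q.1) = Λ.d μ := aux_lub_self (Λ.d_mem μ) hlub
    rw [Λ.d_comp _ _ hc1] at hdeg
    have hq1 : Λ.d q.1 = 1 := by
      have := hdeg
      calc Λ.d q.1 = (Λ.d μ)⁻¹ * (Λ.d μ * Λ.d q.1) := by group
        _ = 1 := by rw [this]; group
    have e1 : q.1 = Λ.ident (Λ.src μ) := by
      rw [aux_deg_one Λ hq1, ← hc1]
    have e2 : q.2 = q.1 := (aux_comp_cancel Λ hc1 hc2 heq).symm
    have : q = (q.1, q.2) := rfl
    rw [Set.mem_singleton_iff, this, e2, e1]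
  · rintro rfl
    refine ⟨by rw [Λ.tgt_ident], by rw [Λ.tgt_ident], rfl, ?_⟩
    rw [Λ.comp_id]
    exact ⟨⟨Λ.ident (Λ.src μ), by rw [Λ.tgt_ident], (Λ.comp_id μ).symm⟩,
      ⟨Λ.ident (Λ.src μ), by rw [Λ.tgt_ident], (Λ.comp_id μ).symm⟩,
      Λ.d_mem μ, aux_qle_refl _, aux_qle_refl _, fun t ht h1 _ => h1⟩

lemma aux_MCEpairs_right {μ lam : Λ.Mor} (hl : Λ.tgt lam = Λ.src μ) :
    Λ.MCEpairs μ (Λ.comp μ lam) = {(lam, Λ.ident (Λ.src lam))} := by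
  have hsc : Λ.src (Λ.comp μ lam) = Λ.src lam := Λ.src_comp μ lam hl.symm
  have hdc : Λ.d (Λ.comp μ lam) = Λ.d μ * Λ.d lam := Λ.d_comp μ lam hl.symm
  ext q
  constructor
  · rintro ⟨hc1, hc2, heq, ⟨_, _, hlub⟩⟩
    rw [hdc] at hlub
    have hdeg : Λ.d (Λ.comp μ q.1) = Λ.d μ * Λ.d lam :=
      aux_lub_right (Λ.d_mem μ) (Λ.d_mem lam) hlub
    -- degree of q.2 is 1
    have hc2' : Λ.src lam = Λ.tgt q.2 := by rw [← hsc]; exact hc2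
    have hdeg2 : Λ.d μ * Λ.d lam * Λ.d q.2 = Λ.d μ * Λ.d lam := by
      rw [← hdc, ← Λ.d_comp _ _ hc2, ← heq, hdeg, hdc]
    have hq2 : Λ.d q.2 = 1 := by
      calc Λ.d q.2 = (Λ.d μ * Λ.d lam)⁻¹ * (Λ.d μ * Λ.d lam * Λ.d q.2) := by group
        _ = 1 := by rw [hdeg2]; group
    have e2 : q.2 = Λ.ident (Λ.src lam) := by
      rw [aux_deg_one Λ hq2, ← hc2']
    have heq' : Λ.comp μ q.1 = Λ.comp μ lam := by
      rw [heq, e2, ← hsc, Λ.comp_id]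
    have e1 : q.1 = lam := aux_comp_cancel Λ hc1 hl.symm heq'
    have : q = (q.1, q.2) := rfl
    rw [Set.mem_singleton_iff, this, e1, e2]
  · rintro rfl
    refine ⟨hl.symm, by rw [hsc, Λ.tgt_ident], by rw [← hsc, Λ.comp_id], ?_⟩
    refine ⟨⟨lam, hl.symm, rfl⟩, ⟨Λ.ident (Λ.src lam), by rw [hsc, Λ.tgt_ident],
      by rw [← hsc, Λ.comp_id]⟩, ?_⟩
    rw [hdc]
    exact ⟨Q.mul_mem (Λ.d_mem μ) (Λ.d_mem lam), aux_le_mul (Λ.d_mem lam),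
      aux_qle_refl _, fun t ht h1 h2 => h2⟩

lemma aux_MCEpairs_left {μ eta : Λ.Mor} (he : Λ.tgt eta = Λ.src μ) :
    Λ.MCEpairs (Λ.comp μ eta) μ = {(Λ.ident (Λ.src eta), eta)} := by
  have hsc : Λ.src (Λ.comp μ eta) = Λ.src eta := Λ.src_comp μ eta he.symm
  have hdc : Λ.d (Λ.comp μ eta) = Λ.d μ * Λ.d eta := Λ.d_comp μ eta he.symm
  ext q
  constructor
  · rintro ⟨hc1, hc2, heq, ⟨_, _, hlub⟩⟩
    rw [hdc] at hlub
    have hdeg : Λ.d (Λ.comp (Λ.comp μ eta) q.1) = Λ.d μ * Λ.d eta :=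
      aux_lub_left (Λ.d_mem μ) (Λ.d_mem eta) hlub
    rw [Λ.d_comp _ _ hc1, hdc] at hdeg
    have hq1 : Λ.d q.1 = 1 := by
      calc Λ.d q.1 = (Λ.d μ * Λ.d eta)⁻¹ * (Λ.d μ * Λ.d eta * Λ.d q.1) := by group
        _ = 1 := by rw [hdeg]; group
    have hc1' : Λ.src eta = Λ.tgt q.1 := by rw [← hsc]; exact hc1
    have e1 : q.1 = Λ.ident (Λ.src eta) := by
      rw [aux_deg_one Λ hq1, ← hc1']
    have heq' : Λ.comp μ eta = Λ.comp μ q.2 := by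
      rw [← heq, e1, ← hsc, Λ.comp_id]
    have e2 : q.2 = eta := (aux_comp_cancel Λ he.symm hc2 heq').symm
    have : q = (q.1, q.2) := rfl
    rw [Set.mem_singleton_iff, this, e1, e2]
  · rintro rfl
    refine ⟨by rw [hsc, Λ.tgt_ident], he.symm, by rw [← hsc, Λ.comp_id], ?_⟩
    rw [← hsc, Λ.comp_id]
    refine ⟨⟨Λ.ident (Λ.src eta), by rw [hsc, Λ.tgt_ident],
      by rw [← hsc, Λ.comp_id]⟩, ⟨eta, he.symm, rfl⟩, ?_⟩
    rw [hdc]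
    exact ⟨Q.mul_mem (Λ.d_mem μ) (Λ.d_mem eta), aux_qle_refl _,
      aux_le_mul (Λ.d_mem eta), fun t ht h1 h2 => h1⟩

lemma aux_MCE_comp_empty {μ eta lam : Λ.Mor} (he : Λ.tgt eta = Λ.src μ)
    (hl : Λ.tgt lam = Λ.src μ) (h : Λ.MCE eta lam = ∅) :
    Λ.MCEpairs (Λ.comp μ eta) (Λ.comp μ lam) = ∅ := by
  have hmce : Λ.MCE (Λ.comp μ eta) (Λ.comp μ lam) = ∅ := by
    ext ξ
    simp only [Set.mem_empty_iff_false, iff_false]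
    rintro ⟨⟨α, hα, rfl⟩, ⟨β, hβ, hcomp⟩, hlub⟩
    have hα' : Λ.src eta = Λ.tgt α := by rw [← Λ.src_comp μ eta he.symm]; exact hα
    have hβ' : Λ.src lam = Λ.tgt β := by rw [← Λ.src_comp μ lam hl.symm]; exact hβ
    have hassoc1 : Λ.comp (Λ.comp μ eta) α = Λ.comp μ (Λ.comp eta α) :=
      Λ.comp_assoc μ eta α he.symm hα'
    have hassoc2 : Λ.comp (Λ.comp μ lam) β = Λ.comp μ (Λ.comp lam β) :=
      Λ.comp_assoc μ lam β hl.symm hβ'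
    have hteta : Λ.src μ = Λ.tgt (Λ.comp eta α) := by
      rw [Λ.tgt_comp eta α hα', he]
    have htlam : Λ.src μ = Λ.tgt (Λ.comp lam β) := by
      rw [Λ.tgt_comp lam β hβ', hl]
    have hζ : Λ.comp eta α = Λ.comp lam β := by
      apply aux_comp_cancel Λ hteta htlam
      rw [← hassoc1, ← hassoc2, ← hcomp]
    have hmem : Λ.comp eta α ∈ Λ.MCE eta lam := by
      refine ⟨⟨α, hα', rfl⟩, ⟨β, hβ', hζ⟩, Λ.d_mem _, ?_, ?_, ?_⟩
      · rw [Λ.d_comp eta α hα']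
        simp [QLOGroup.le, Λ.d_mem α]
      · rw [hζ, Λ.d_comp lam β hβ']
        simp [QLOGroup.le, Λ.d_mem β]
      · intro t ht h1 h2
        obtain ⟨_, _, _, hmin⟩ := hlub
        have key := hmin (Λ.d μ * t) (Q.mul_mem (Λ.d_mem μ) ht) ?_ ?_
        · have hd : Λ.d (Λ.comp (Λ.comp μ eta) α) = Λ.d μ * Λ.d (Λ.comp eta α) := by
            rw [hassoc1, Λ.d_comp μ _ hteta]
          rw [QLOGroup.le, hd] at key
          have : (Λ.d μ * Λ.d (Λ.comp eta α))⁻¹ * (Λ.d μ * t)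
              = (Λ.d (Λ.comp eta α))⁻¹ * t := by group
          rwa [QLOGroup.le, ← this]
        · rw [QLOGroup.le, Λ.d_comp μ eta he.symm]
          have : (Λ.d μ * Λ.d eta)⁻¹ * (Λ.d μ * t) = (Λ.d eta)⁻¹ * t := by group
          rw [this]; exact h1
        · rw [QLOGroup.le, Λ.d_comp μ lam hl.symm]
          have : (Λ.d μ * Λ.d lam)⁻¹ * (Λ.d μ * t) = (Λ.d lam)⁻¹ * t := by group
          rw [this]; exact h2
    rw [h] at hmem
    exact hmem
  ext q
  simp only [Set.mem_empty_iff_false, iff_false]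
  rintro ⟨_, _, _, hm⟩
  rw [hmce] at hm
  exact hm

variable {A : Type*} [NormedRing A] [StarRing A] [CStarRing A]
  (τ : Λ.Mor → Λ.Mor → A)

lemma aux_tau_idem (hτ : Λ.IsBalRep τ) (μ : Λ.Mor) : τ μ μ * τ μ μ = τ μ μ := by
  rw [hτ.2 μ μ μ μ ⟨rfl, rfl⟩ ⟨rfl, rfl⟩, aux_MCEpairs_self, finsum_mem_singleton,
    Λ.comp_id]

lemma aux_tau_absorb (hτ : Λ.IsBalRep τ) {μ lam : Λ.Mor} (hl : Λ.tgt lam = Λ.src μ) :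
    τ μ μ * τ (Λ.comp μ lam) (Λ.comp μ lam) = τ (Λ.comp μ lam) (Λ.comp μ lam) := by
  rw [hτ.2 μ μ _ _ ⟨rfl, rfl⟩ ⟨rfl, rfl⟩, aux_MCEpairs_right Λ hl, finsum_mem_singleton]
  have hsc : Λ.src (Λ.comp μ lam) = Λ.src lam := Λ.src_comp μ lam hl.symm
  rw [← hsc, Λ.comp_id]

lemma aux_tau_left (hτ : Λ.IsBalRep τ) {μ eta : Λ.Mor} (he : Λ.tgt eta = Λ.src μ) :
    τ (Λ.comp μ eta) (Λ.comp μ eta) * τ μ μ = τ (Λ.comp μ eta) (Λ.comp μ eta) := by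
  rw [hτ.2 _ _ μ μ ⟨rfl, rfl⟩ ⟨rfl, rfl⟩, aux_MCEpairs_left Λ he, finsum_mem_singleton]
  have hsc : Λ.src (Λ.comp μ eta) = Λ.src eta := Λ.src_comp μ eta he.symm
  rw [← hsc, Λ.comp_id]

lemma aux_tau_zero (hτ : Λ.IsBalRep τ) {μ eta lam : Λ.Mor} (he : Λ.tgt eta = Λ.src μ)
    (hl : Λ.tgt lam = Λ.src μ) (h : Λ.MCE eta lam = ∅) :
    τ (Λ.comp μ eta) (Λ.comp μ eta) * τ (Λ.comp μ lam) (Λ.comp μ lam) = 0 := by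
  rw [hτ.2 _ _ _ _ ⟨rfl, rfl⟩ ⟨rfl, rfl⟩, aux_MCE_comp_empty Λ he hl h, finsum_mem_empty]

end Aux14
/-- If in addition `τ_{μ,μ} ≠ 0` for all `μ` and
`∏_{α∈E}(τ_{μ,μ} − τ_{μα,μα}) ≠ 0` for every `μ` and finite exhaustive
`E ⊆ s(μ)Λ∖{s(μ)}`, then `θ_{μ,μ} ≠ 0` for all `μ ∈ Λ^p v`. -/
theorem stmt14 {G : Type u} [Group G] {Q : QLOGroup G} (Λ : PGraph Q)
    (hFA : Λ.FinitelyAligned)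
    {A : Type*} [NormedRing A] [StarRing A] [CStarRing A] [CompleteSpace A]
    [NormedAlgebra ℂ A] [StarModule ℂ A]
    (τ : Λ.Mor → Λ.Mor → A) (hτ : Λ.IsBalRep τ)
    (p : G) (v : Λ.Obj) (H : List Λ.Mor) (hnd : H.Nodup)
    (hH : ∀ lam ∈ H, Λ.tgt lam = v ∧ lam ≠ Λ.ident v)
    (hnz : ∀ mu : Λ.Mor, τ mu mu ≠ 0)
    (hgap : ∀ mu : Λ.Mor, ∀ E : List Λ.Mor, E.Nodup →
      (∀ lam ∈ E, Λ.tgt lam = Λ.src mu ∧ lam ≠ Λ.ident (Λ.src mu)) →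
      (∀ x : Λ.Mor, Λ.tgt x = Λ.src mu → ∃ lam ∈ E, (Λ.MCE x lam).Nonempty) →
      ((E.map fun a => τ mu mu - τ (Λ.comp mu a) (Λ.comp mu a)).prod) ≠ 0) :
    ∀ mu : Λ.Mor, Λ.d mu = p → Λ.src mu = v → Λ.theta τ H mu mu ≠ 0 := by
  intro μ hd hsrc
  by_cases hex : ∀ x : Λ.Mor, Λ.tgt x = Λ.src μ → ∃ lam ∈ H, (Λ.MCE x lam).Nonempty
  · -- H is exhaustive
    have hH' : ∀ lam ∈ H, Λ.tgt lam = Λ.src μ ∧ lam ≠ Λ.ident (Λ.src μ) := by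
      intro lam hl
      rw [hsrc]; exact hH lam hl
    have hprod := hgap μ H hnd hH' hex
    unfold PGraph.theta
    cases H with
    | nil => simpa using hnz μ
    | cons a rest =>
      have ha : Λ.tgt a = Λ.src μ := (hH' a (List.mem_cons_self (a := a) (l := rest))).1
      rw [List.map_cons, List.prod_cons, ← mul_assoc, mul_sub,
        aux_tau_idem Λ τ hτ μ, aux_tau_absorb Λ τ hτ ha]
      rw [List.map_cons, List.prod_cons] at hprod
      exact hprod
  · -- H is not exhaustive
    push_neg at hex
    obtain ⟨η, hη, hηe⟩ := hex
    have hηe' : ∀ lam ∈ H, Λ.MCE η lam = ∅ := hηe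
    have key : ∀ (L : List Λ.Mor), (∀ lam ∈ L, Λ.tgt lam = Λ.src μ ∧ Λ.MCE η lam = ∅) →
        τ (Λ.comp μ η) (Λ.comp μ η) *
          ((L.map fun a => τ μ μ - τ (Λ.comp μ a) (Λ.comp μ a)).prod)
          = τ (Λ.comp μ η) (Λ.comp μ η) := by
      intro L hL
      induction L with
      | nil => simp
      | cons a rest ih =>
        obtain ⟨ha, hma⟩ := hL a (List.mem_cons_self (a := a) (l := rest))
        rw [List.map_cons, List.prod_cons, ← mul_assoc, mul_sub,
          aux_tau_left Λ τ hτ hη, aux_tau_zero Λ τ hτ hη ha hma, sub_zero]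
        exact ih (fun lam hl => hL lam (List.mem_cons_of_mem _ hl))
    intro hzero
    have hkey := key H (fun lam hl => ⟨by rw [hsrc]; exact (hH lam hl).1, hηe' lam hl⟩)
    have : τ (Λ.comp μ η) (Λ.comp μ η) * Λ.theta τ H μ μ
        = τ (Λ.comp μ η) (Λ.comp μ η) := by
      unfold PGraph.theta
      rw [← mul_assoc, aux_tau_left Λ τ hτ hη, hkey]
    rw [hzero, mul_zero] at this
    exact hnz _ this.symm
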